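/- arXiv:2307.01950 — 3 statements merged into one kernel-verified Lean document; each statement's English description precedes it below -/
import Mathlib

section
/- For N odd and any even integer t ≠ 0, the involution X ↦ X Δ [1,N−1] of E_N maps E_N^{t,+} bijectively onto E_N^{−t,+}, where E_N^{t,+} = {X ∈ E_N : N ∉ X and γ(X) = t}. -/
open scoped symmDiff

/-- γ(X) = |{i ∈ X : i even}| − |{i ∈ X : i odd}|, as an integer. -/
def gam (X : Finset ℕ) : ℤ :=
  ((X.filter (fun i => Even i)).card : ℤ) - ((X.filter (fun i => Odd i)).card : ℤ)

lemma gam_insert_even {i : ℕ} {X : Finset ℕ} (hi : Even i) (h : i ∉ X) :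
    gam (insert i X) = gam X + 1 := by
  unfold gam
  rw [Finset.filter_insert, Finset.filter_insert, if_pos hi,
    if_neg (by simpa using hi), Finset.card_insert_of_notMem (by simp [h])]
  push_cast; ring

lemma gam_insert_odd {i : ℕ} {X : Finset ℕ} (hi : Odd i) (h : i ∉ X) :
    gam (insert i X) = gam X - 1 := by
  unfold gam
  rw [Finset.filter_insert, Finset.filter_insert, if_pos hi,
    if_neg (by simpa using hi), Finset.card_insert_of_notMem (by simp [h])]
  push_cast; ring

lemma gam_Icc (m : ℕ) : gam (Finset.Icc 1 (2 * m)) = 0 := by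
  induction m with
  | zero => simp; rfl
  | succ m ih =>
      have h1 : Finset.Icc 1 (2 * (m + 1)) =
          insert (2 * m + 2) (insert (2 * m + 1) (Finset.Icc 1 (2 * m))) := by
        have e1 : Finset.Icc 1 (2 * m + 1) = insert (2 * m + 1) (Finset.Icc 1 (2 * m)) := by
          ext x; simp [Finset.mem_Icc]; omega
        have e2 : Finset.Icc 1 (2 * m + 2) = insert (2 * m + 2) (Finset.Icc 1 (2 * m + 1)) := by
          ext x; simp [Finset.mem_Icc]; omega
        rw [show 2 * (m + 1) = 2 * m + 2 by ring, e2, e1]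
      rw [h1, gam_insert_even ⟨m + 1, by ring⟩ (by simp [Finset.mem_Icc]),
        gam_insert_odd ⟨m, by ring⟩ (by simp [Finset.mem_Icc]), ih]
      ring

lemma gam_sdiff {X D : Finset ℕ} (h : X ⊆ D) : gam (D \ X) = gam D - gam X := by
  unfold gam
  have hfs : ∀ p : ℕ → Prop, ∀ _ : DecidablePred p,
      (D \ X).filter p = D.filter p \ X.filter p := by
    intro p _; ext x; simp only [Finset.mem_sdiff, Finset.mem_filter]; tauto
  rw [hfs _ _, hfs _ _,
    Finset.card_sdiff_of_subset (Finset.filter_subset_filter _ h),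
    Finset.card_sdiff_of_subset (Finset.filter_subset_filter _ h),
    Nat.cast_sub (Finset.card_le_card (Finset.filter_subset_filter _ h)),
    Nat.cast_sub (Finset.card_le_card (Finset.filter_subset_filter _ h))]
  ring

lemma stmt5_maps (N : ℕ) (hN : Odd N) (h3 : 3 ≤ N) (t : ℤ) :
    Set.MapsTo (fun X => X ∆ Finset.Icc 1 (N - 1))
      {X : Finset ℕ | X ⊆ Finset.Icc 1 N ∧ Even X.card ∧ N ∉ X ∧ gam X = t}
      {X : Finset ℕ | X ⊆ Finset.Icc 1 N ∧ Even X.card ∧ N ∉ X ∧ gam X = -t} := by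
  rintro X ⟨hsub, hcard, hNX, hgam⟩
  obtain ⟨k, hk⟩ := hN
  have hXD : X ⊆ Finset.Icc 1 (N - 1) := by
    intro i hi
    have h1 := hsub hi
    rw [Finset.mem_Icc] at h1 ⊢
    have : i ≠ N := fun h => hNX (h ▸ hi)
    omega
  have heq : X ∆ Finset.Icc 1 (N - 1) = Finset.Icc 1 (N - 1) \ X :=
    symmDiff_of_le hXD
  have hDcard : (Finset.Icc 1 (N - 1)).card = N - 1 := by
    rw [Nat.card_Icc]; omega
  refine ⟨?_, ?_, ?_, ?_⟩
  · simp only [heq]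
    exact (Finset.sdiff_subset).trans (Finset.Icc_subset_Icc_right (by omega))
  · simp only [heq]
    rw [Finset.card_sdiff_of_subset hXD, hDcard]
    obtain ⟨a, ha⟩ := hcard
    exact ⟨k - a, by have := Finset.card_le_card hXD; omega⟩
  · simp only [heq, Finset.mem_sdiff, Finset.mem_Icc]
    omega
  · simp only [heq]
    rw [gam_sdiff hXD, hgam, show N - 1 = 2 * k by omega, gam_Icc]
    ring

/-- For even t ≠ 0, X ↦ X ∆ [1,N−1] maps E_N^{t,+} bijectively onto E_N^{−t,+}. -/
theorem stmt5 (N : ℕ) (hN : Odd N) (h3 : 3 ≤ N) (t : ℤ) (ht : Even t) (ht0 : t ≠ 0) :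
    Set.BijOn (fun X => X ∆ Finset.Icc 1 (N - 1))
      {X : Finset ℕ | X ⊆ Finset.Icc 1 N ∧ Even X.card ∧ N ∉ X ∧ gam X = t}
      {X : Finset ℕ | X ⊆ Finset.Icc 1 N ∧ Even X.card ∧ N ∉ X ∧ gam X = -t} := by
  have h2 := stmt5_maps N hN h3 (-t)
  rw [neg_neg] at h2
  refine Set.InvOn.bijOn ⟨?_, ?_⟩ (stmt5_maps N hN h3 t) h2
  · intro x _; simp [symmDiff_symmDiff_cancel_right]
  · intro x _; simp [symmDiff_symmDiff_cancel_right]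
end

section
/- The restriction of the symplectic form (X,X') = |X ∩ X'| mod 2 on E_N to the subspace E_N^+ = {X ∈ E_N : N ∉ X} has one-dimensional radical, spanned by [1,N−1] = {1,...,N−1}. -/
/-- The radical of the form (X,X') = |X ∩ X'| mod 2 restricted to
E_N^+ = {X ∈ E_N : N ∉ X} consists exactly of ∅ and [1,N−1]; i.e. it is
one-dimensional, spanned by [1,N−1]. -/
theorem stmt7 (N : ℕ) (hN : Odd N) (h3 : 3 ≤ N) :
    ∀ X : Finset ℕ, X ⊆ Finset.Icc 1 N → Even X.card → N ∉ X →
      ((∀ X' : Finset ℕ, X' ⊆ Finset.Icc 1 N → Even X'.card → N ∉ X' →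
          Even (X ∩ X').card) ↔ (X = ∅ ∨ X = Finset.Icc 1 (N - 1))) := by
  intro X hX hXeven hNX
  have hXsub : X ⊆ Finset.Icc 1 (N - 1) := by
    intro x hx
    have hx' := hX hx
    simp only [Finset.mem_Icc] at hx' ⊢
    have : x ≠ N := fun h => hNX (h ▸ hx)
    omega
  constructor
  · intro h
    by_contra hc
    push_neg at hc
    obtain ⟨h1, h2⟩ := hc
    obtain ⟨a, ha⟩ := h1
    have hns : ¬ Finset.Icc 1 (N - 1) ⊆ X := fun hs => h2 (Finset.Subset.antisymm hXsub hs)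
    obtain ⟨b, hb, hbX⟩ := Finset.not_subset.mp hns
    have hab : a ≠ b := fun hEq => hbX (hEq ▸ ha)
    have haI : a ∈ Finset.Icc 1 (N - 1) := hXsub ha
    simp only [Finset.mem_Icc] at haI hb
    have hkey := h {a, b} ?_ ?_ ?_
    · have hint : X ∩ {a, b} = {a} := by
        ext x
        simp only [Finset.mem_inter, Finset.mem_insert, Finset.mem_singleton]
        constructor
        · rintro ⟨hxX, rfl | rfl⟩
          · rfl
          · exact absurd hxX hbX
        · rintro rfl; exact ⟨ha, Or.inl rfl⟩
      rw [hint, Finset.card_singleton] at hkey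
      exact (Nat.not_even_iff_odd.mpr odd_one) hkey
    · intro x hx
      simp only [Finset.mem_insert, Finset.mem_singleton] at hx
      rcases hx with rfl | rfl <;> simp only [Finset.mem_Icc] <;> omega
    · rw [Finset.card_insert_of_notMem (by simpa using hab), Finset.card_singleton]
      exact even_two
    · simp only [Finset.mem_insert, Finset.mem_singleton]
      push_neg
      omega
  · rintro (rfl | rfl) X' hX'sub hX'even hNX'
    · simp
    · have hsub : X' ⊆ Finset.Icc 1 (N - 1) := by
        intro x hx
        have hx' := hX'sub hx
        simp only [Finset.mem_Icc] at hx' ⊢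
        have : x ≠ N := fun h => hNX' (h ▸ hx)
        omega
      rw [Finset.inter_eq_right.mpr hsub]
      exact hX'even
end

section
/- The 4×4 rational matrix M = (1/2)·[[−1,−1,0,1],[−1,−1,1,0],[−2,2,1,1],[2,−2,1,1]] is an involution (M² = I), but M is not upper triangular with respect to any ordering of the index set {1,2,3,4}: for every permutation σ of {1,2,3,4}, the conjugated matrix P_σ M P_σ^{−1} is not upper triangular. -/
/-- The matrix 2α'_1 of §5.1 (N = 5), divided by 2. -/
noncomputable def M : Matrix (Fin 4) (Fin 4) ℚ :=
  (1 / 2 : ℚ) • !![-1, -1, 0, 1; -1, -1, 1, 0; -2, 2, 1, 1; 2, -2, 1, 1]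

/-- M is an involution, but no simultaneous permutation of rows and columns
makes it upper triangular. -/
theorem stmt18 :
    M * M = 1 ∧
    ∀ σ : Equiv.Perm (Fin 4), ∃ i j : Fin 4, j < i ∧ M (σ i) (σ j) ≠ 0 := by
  constructor
  · show M * M = 1
    rw [M]
    ext i j
    fin_cases i <;> fin_cases j <;>
      simp [Matrix.mul_apply, Fin.sum_univ_succ, Matrix.one_apply] <;> norm_num
  · intro σ
    have h23 : M 2 3 = 1/2 := by
      norm_num [M, Matrix.vecHead, Matrix.vecTail]; rfl
    have h32 : M 3 2 = 1/2 := by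
      norm_num [M, Matrix.vecHead, Matrix.vecTail]; rfl
    set a := σ.symm 2 with ha
    set b := σ.symm 3 with hb
    have hsa0 : σ a = 2 := by simp [ha]
    have hsb0 : σ b = 3 := by simp [hb]
    have hab : a ≠ b := by
      intro h
      have := congrArg σ h
      rw [hsa0, hsb0] at this
      exact absurd this (by decide)
    rcases lt_or_gt_of_ne hab with h | h
    · exact ⟨b, a, h, by rw [hsb0, hsa0, h32]; norm_num⟩
    · exact ⟨a, b, h, by rw [hsa0, hsb0, h23]; norm_num⟩
end
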